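/- Let f be a polynomial with rational coefficients of degree d. Then for every nonzero rational x and every rational n, writing g(t) = f(x·t), one has x·S_g(n/x) = S_f(n) + ∑_{r=1}^{d+1} (F*_r(x)/r!) · (Δ^{r-1} f(n) − Δ^{r-1} f(0)), where Δ = Δ_1 is the unit-step forward difference operator. -/

import Mathlib

/-- The power series `D*(z) = ∑_{r≥0} d*_r z^r` over `ℚ[x]` with
`d*_r = (∏_{j=1}^{r} (x - j))/(r+1)!`, i.e. the power series of `((1+z)^x - 1)/(xz)`. -/
noncomputable def DstarSer : PowerSeries (Polynomial ℚ) :=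
  PowerSeries.mk fun r =>
    Polynomial.C ((1 : ℚ) / (Nat.factorial (r + 1))) *
      ∏ j ∈ Finset.range r, (Polynomial.X - Polynomial.C ((j : ℚ) + 1))

/-- The exponential generating function `∑_{r≥0} (F_r/r!) z^r` of a sequence of polynomials. -/
noncomputable def egf (F : ℕ → Polynomial ℚ) : PowerSeries (Polynomial ℚ) :=
  PowerSeries.mk fun r => Polynomial.C ((1 : ℚ) / (Nat.factorial r)) * F r

/-- The forward difference operator with step size `x`: `Δ_x f(t) = f(t+x) - f(t)`. -/
noncomputable def fdiff (x : ℚ) (p : Polynomial ℚ) : Polynomial ℚ :=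
  p.comp (Polynomial.X + Polynomial.C x) - p

open Polynomial Finset

namespace Scratch

noncomputable def bpoly (k : ℕ) : Polynomial ℚ := C ((k.factorial : ℚ)⁻¹) * descPochhammer ℚ k

lemma fdiff_add (x : ℚ) (p q : Polynomial ℚ) : fdiff x (p + q) = fdiff x p + fdiff x q := by
  simp [fdiff, add_comp]; ring

lemma fdiff_Cmul (x a : ℚ) (p : Polynomial ℚ) : fdiff x (C a * p) = C a * fdiff x p := by
  simp [fdiff, mul_comp]; ring

lemma fdiff_zero_poly (x : ℚ) : fdiff x (0 : Polynomial ℚ) = 0 := by simp [fdiff]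

lemma fdiff_sum (x : ℚ) {ι : Type*} (s : Finset ι) (g : ι → Polynomial ℚ) :
    fdiff x (∑ i ∈ s, g i) = ∑ i ∈ s, fdiff x (g i) := by
  classical
  induction s using Finset.induction with
  | empty => simp [fdiff_zero_poly]
  | insert _ _ h ih => simp [Finset.sum_insert h, fdiff_add, ih]

lemma fdiff_comp (x y : ℚ) (p : Polynomial ℚ) :
    fdiff y (p.comp (X + C x)) = (fdiff y p).comp (X + C x) := by
  simp only [fdiff, sub_comp, comp_assoc]
  congr 2
  simp [add_comp]; ring

lemma eval_fdiff (x : ℚ) (p : Polynomial ℚ) (t : ℚ) :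
    (fdiff x p).eval t = p.eval (t + x) - p.eval t := by
  simp [fdiff, eval_comp]

lemma fdiff_const {x : ℚ} (hx : x ≠ 0) {q : Polynomial ℚ} (hq : fdiff x q = 0) :
    q = C (q.eval 0) := by
  have hev : ∀ t : ℚ, q.eval (t + x) = q.eval t := by
    intro t
    have := congrArg (Polynomial.eval t) hq
    simpa [eval_fdiff, sub_eq_zero] using this
  have hk : ∀ k : ℕ, q.eval (k * x) = q.eval 0 := by
    intro k
    induction k with
    | zero => simp
    | succ k ih => rw [Nat.cast_succ, add_mul, one_mul, hev, ih]
  set E := q - C (q.eval 0) with hE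
  have hroots : {r : ℚ | E.IsRoot r}.Infinite := by
    apply Set.infinite_of_injective_forall_mem (f := fun k : ℕ => (k : ℚ) * x)
    · intro a b hab
      exact Nat.cast_injective (mul_right_cancel₀ hx hab)
    · intro k
      simp [Set.mem_setOf_eq, IsRoot, hE, hk k]
  have : E = 0 := Polynomial.eq_zero_of_infinite_isRoot E hroots
  have := sub_eq_zero.mp this
  exact this


lemma natDegree_fdiff_le (x : ℚ) (p : Polynomial ℚ) :
    (fdiff x p).natDegree ≤ p.natDegree - 1 := by
  rcases eq_or_ne p.natDegree 0 with h0 | h0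
  · obtain ⟨a, rfl⟩ := Polynomial.natDegree_eq_zero.mp h0
    simp [fdiff]
  · have hp : p ≠ 0 := fun h => h0 (by simp [h])
    have hq : (X + C x : Polynomial ℚ).natDegree = 1 := by
      simpa using Polynomial.natDegree_X_add_C x
    have hcomp_nd : (p.comp (X + C x)).natDegree = p.natDegree := by
      rw [Polynomial.natDegree_comp, hq, mul_one]
    have hlc : (p.comp (X + C x)).leadingCoeff = p.leadingCoeff := by
      rw [Polynomial.leadingCoeff_comp (by rw [hq]; norm_num)]
      simp [Polynomial.leadingCoeff_X_add_C]
    have hcomp_ne : p.comp (X + C x) ≠ 0 := by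
      intro h
      rw [h] at hcomp_nd
      exact h0 (by simpa using hcomp_nd.symm)
    have hdeg : (p.comp (X + C x)).degree = p.degree := by
      rw [Polynomial.degree_eq_natDegree hcomp_ne, Polynomial.degree_eq_natDegree hp, hcomp_nd]
    have hsub := Polynomial.degree_sub_lt hdeg hcomp_ne hlc
    rw [hdeg] at hsub
    have hsub' : (fdiff x p).degree < p.degree := hsub
    have h2 : (fdiff x p).natDegree < p.natDegree := by
      rcases eq_or_ne (fdiff x p) 0 with hz | hz
      · rw [hz]; simpa using Nat.pos_of_ne_zero h0
      · exact Polynomial.natDegree_lt_natDegree hz hsub'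
    omega

lemma iter_fdiff_vanish : ∀ (N : ℕ) (p : Polynomial ℚ), p.natDegree ≤ N →
    (fdiff 1)^[N + 1] p = 0 := by
  intro N
  induction N with
  | zero =>
    intro p hp
    obtain ⟨a, rfl⟩ := Polynomial.natDegree_eq_zero.mp (Nat.le_zero.mp hp)
    simp [fdiff]
  | succ N ih =>
    intro p hp
    rw [Function.iterate_succ_apply]
    apply ih
    have := natDegree_fdiff_le 1 p
    omega

lemma bpoly_zero : bpoly 0 = 1 := by simp [bpoly]

lemma fdiff_bpoly (k : ℕ) : fdiff 1 (bpoly (k + 1)) = bpoly k := by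
  have hcomp : (descPochhammer ℚ (k+1)).comp (X + C 1) = (X + C 1) * descPochhammer ℚ k := by
    rw [descPochhammer_succ_left, mul_comp, X_comp, comp_assoc]
    congr 1
    rw [sub_comp, X_comp, one_comp]
    simp
  have key : fdiff 1 (descPochhammer ℚ (k+1)) = (C ((k:ℚ)+1)) * descPochhammer ℚ k := by
    have hc : (C ((k:ℚ)+1) : Polynomial ℚ) = C (k:ℚ) + 1 := by rw [map_add, C_1]
    have hk : ((k : ℕ) : Polynomial ℚ) = C (k:ℚ) := by simp
    rw [fdiff, hcomp, descPochhammer_succ_right, hk, hc]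
    rw [C_1]
    ring
  rw [bpoly, fdiff_Cmul, key, bpoly]
  rw [← mul_assoc, ← C_mul]
  congr 2
  rw [Nat.factorial_succ]
  push_cast
  field_simp

lemma fdiff_bpoly_zero : fdiff 1 (bpoly 0) = 0 := by
  simp [bpoly_zero, fdiff]

lemma bpoly_eval_zero (k : ℕ) : (bpoly k).eval 0 = if k = 0 then 1 else 0 := by
  rw [bpoly, eval_mul, eval_C, descPochhammer_eval_zero]
  split <;> simp_all [Nat.factorial]

lemma natDegree_bpoly_le (k : ℕ) : (bpoly k).natDegree ≤ k := by
  refine le_trans (Polynomial.natDegree_C_mul_le _ _) ?_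
  exact le_of_eq (descPochhammer_natDegree (R := ℚ) k)


lemma iter_fdiff_zero' : ∀ j : ℕ, (fdiff 1)^[j] (0 : Polynomial ℚ) = 0 := by
  intro j
  induction j with
  | zero => simp
  | succ j ihj => rw [Function.iterate_succ_apply, fdiff_zero_poly, ihj]

lemma iter_fdiff_bpoly (j k : ℕ) :
    (fdiff 1)^[j] (bpoly k) = if j ≤ k then bpoly (k - j) else 0 := by
  induction j generalizing k with
  | zero => simp
  | succ j ih =>
    rw [Function.iterate_succ_apply]
    rcases k with _ | k
    · rw [fdiff_bpoly_zero, if_neg (by omega)]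
      exact iter_fdiff_zero' j
    · rw [fdiff_bpoly, ih]
      by_cases h : j ≤ k
      · rw [if_pos h, if_pos (by omega)]
        congr 1
        omega
      · rw [if_neg h, if_neg (by omega)]

lemma inv_newton : ∀ (N : ℕ) (p : Polynomial ℚ), p.natDegree ≤ N →
    p = ∑ k ∈ range (N + 1), C (((fdiff 1)^[k] p).eval 0) * bpoly k := by
  intro N
  induction N with
  | zero =>
    intro p hp
    obtain ⟨a, rfl⟩ := Polynomial.natDegree_eq_zero.mp (Nat.le_zero.mp hp)
    simp [bpoly_zero]
  | succ N ih =>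
    intro p hp
    set P := ∑ k ∈ range (N + 2), C (((fdiff 1)^[k] p).eval 0) * bpoly k with hP
    have hdq : (fdiff 1 p).natDegree ≤ N := by
      have := natDegree_fdiff_le 1 p
      omega
    have hfP : fdiff 1 P = fdiff 1 p := by
      rw [hP, fdiff_sum]
      have : ∀ k ∈ range (N + 2), fdiff 1 (C (((fdiff 1)^[k] p).eval 0) * bpoly k)
          = C (((fdiff 1)^[k] p).eval 0) * fdiff 1 (bpoly k) := fun k _ => fdiff_Cmul _ _ _
      rw [Finset.sum_congr rfl this, Finset.sum_range_succ']
      simp only [fdiff_bpoly_zero, mul_zero, add_zero, fdiff_bpoly]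
      have := ih (fdiff 1 p) hdq
      conv_rhs => rw [this]
      refine Finset.sum_congr rfl fun k _ => ?_
      rw [Function.iterate_succ_apply]
    have hzero : fdiff 1 (p - P) = 0 := by
      have : fdiff 1 (p - P) = fdiff 1 p - fdiff 1 P := by
        simp [fdiff]; ring
      rw [this, hfP, sub_self]
    have hconst := fdiff_const one_ne_zero hzero
    have heval : (p - P).eval 0 = 0 := by
      rw [eval_sub, hP]
      simp only [eval_finset_sum, eval_mul, eval_C, bpoly_eval_zero]
      rw [Finset.sum_congr rfl (fun k _ => by rw [mul_ite, mul_one, mul_zero])]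
      rw [Finset.sum_ite_eq' (range (N+2)) 0]
      simp
    rw [heval, map_zero] at hconst
    exact sub_eq_zero.mp hconst


lemma newton_basis (x : ℚ) : ∀ j : ℕ, (bpoly j).comp (X + C x)
    = ∑ k ∈ range (j + 1), C ((bpoly k).eval x) * bpoly (j - k) := by
  intro j
  induction j with
  | zero =>
    simp [bpoly_zero]
  | succ j ih =>
    set L := (bpoly (j+1)).comp (X + C x) with hL
    set R := ∑ k ∈ range (j + 2), C ((bpoly k).eval x) * bpoly (j + 1 - k) with hR
    have hfL : fdiff 1 L = (bpoly j).comp (X + C x) := by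
      rw [hL, fdiff_comp, fdiff_bpoly]
    have hfR : fdiff 1 R = (bpoly j).comp (X + C x) := by
      rw [hR, fdiff_sum]
      rw [Finset.sum_congr rfl (fun k _ => fdiff_Cmul 1 _ _)]
      rw [Finset.sum_range_succ]
      have h1 : (j + 1 - (j + 1)) = 0 := by omega
      rw [h1, fdiff_bpoly_zero, mul_zero, add_zero]
      rw [ih]
      refine Finset.sum_congr rfl fun k hk => ?_
      have hk' : k ≤ j := by simpa [Nat.lt_succ_iff] using hk
      have : j + 1 - k = (j - k) + 1 := by omega
      rw [this, fdiff_bpoly]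
    have hzero : fdiff 1 (L - R) = 0 := by
      have : fdiff 1 (L - R) = fdiff 1 L - fdiff 1 R := by simp [fdiff]; ring
      rw [this, hfL, hfR, sub_self]
    have hconst := fdiff_const one_ne_zero hzero
    have heval : (L - R).eval 0 = 0 := by
      have hRe : R.eval 0 = (bpoly (j+1)).eval x := by
        rw [hR, eval_finset_sum]
        rw [Finset.sum_eq_single (j+1)]
        · simp [bpoly_eval_zero]
        · intro k hk hne
          have h2 : j + 1 - k ≠ 0 := by simp only [Finset.mem_range] at hk; omega
          simp [bpoly_eval_zero, h2]
        · intro h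
          simp at h
      rw [eval_sub, hL, eval_comp, eval_add, eval_X, eval_C, zero_add, hRe, sub_self]
    rw [heval, map_zero] at hconst
    exact sub_eq_zero.mp hconst


lemma iter_fdiff_sum (j : ℕ) {ι : Type*} (s : Finset ι) (g : ι → Polynomial ℚ) :
    (fdiff 1)^[j] (∑ i ∈ s, g i) = ∑ i ∈ s, (fdiff 1)^[j] (g i) := by
  induction j generalizing g with
  | zero => simp
  | succ j ih =>
    rw [Function.iterate_succ_apply, fdiff_sum]
    exact ih _

lemma iter_fdiff_Cmul (j : ℕ) (a : ℚ) (p : Polynomial ℚ) :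
    (fdiff 1)^[j] (C a * p) = C a * (fdiff 1)^[j] p := by
  induction j generalizing p with
  | zero => simp
  | succ j ih =>
    rw [Function.iterate_succ_apply, fdiff_Cmul, ih, Function.iterate_succ_apply]

lemma newton (x : ℚ) (N : ℕ) (p : Polynomial ℚ) (h : p.natDegree ≤ N) :
    p.comp (X + C x) = ∑ k ∈ range (N + 1), C ((bpoly k).eval x) * (fdiff 1)^[k] p := by
  have hexp := inv_newton N p h
  set a : ℕ → ℚ := fun j => ((fdiff 1)^[j] p).eval 0 with ha
  have hL : p.comp (X + C x) = ∑ j ∈ range (N+1), ∑ k ∈ range (N+1),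
      C (a j) * (C ((bpoly k).eval x) * (if k ≤ j then bpoly (j - k) else 0)) := by
    conv_lhs => rw [hexp]
    rw [Polynomial.sum_comp]
    refine Finset.sum_congr rfl fun j hj => ?_
    rw [mul_comp, C_comp, newton_basis x j, Finset.mul_sum]
    have hj' : j + 1 ≤ N + 1 := by
      simp only [Finset.mem_range] at hj
      omega
    rw [← Finset.sum_subset (Finset.range_subset_range.mpr hj') (fun k _ hk => by
      have : ¬ k ≤ j := by
        simp only [Finset.mem_range, not_lt] at hk
        omega
      rw [if_neg this, mul_zero, mul_zero])]
    refine Finset.sum_congr rfl fun k hk => ?_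
    have : k ≤ j := by
      simp only [Finset.mem_range] at hk
      omega
    rw [if_pos this]
  rw [hL, Finset.sum_comm]
  refine Finset.sum_congr rfl fun k _ => ?_
  conv_rhs => rw [hexp, iter_fdiff_sum, Finset.mul_sum]
  refine Finset.sum_congr rfl fun j _ => ?_
  rw [iter_fdiff_Cmul, iter_fdiff_bpoly]
  ring


def estar (x : ℚ) (m : ℕ) : ℚ := ((1:ℚ) / (Nat.factorial (m+1))) * ∏ j ∈ range m, (x - (j+1))

lemma eval_Dcoeff (x : ℚ) (m : ℕ) :
    ((PowerSeries.coeff (R := Polynomial ℚ) m) DstarSer).eval x = estar x m := by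
  rw [DstarSer, PowerSeries.coeff_mk, eval_mul, eval_C, eval_prod, estar]
  congr 1
  refine Finset.prod_congr rfl fun j _ => ?_
  rw [eval_sub, eval_X, eval_C]

lemma descP_eval (m : ℕ) (y : ℚ) : (descPochhammer ℚ m).eval y = ∏ j ∈ range m, (y - j) := by
  induction m with
  | zero => simp
  | succ m ih => rw [descPochhammer_succ_eval, ih, Finset.prod_range_succ]

lemma bpoly_succ_eval (x : ℚ) (m : ℕ) : (bpoly (m+1)).eval x = x * estar x m := by
  rw [bpoly, eval_mul, eval_C, descP_eval, Finset.prod_range_succ', estar]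
  push_cast
  field_simp
  ring


lemma conv (Fstar : ℕ → Polynomial ℚ) (hFstar : egf Fstar * DstarSer = 1) (x : ℚ) (m : ℕ) :
    ∑ r ∈ range (m+1), ((Fstar r).eval x / (Nat.factorial r : ℚ)) * estar x (m - r)
      = if m = 0 then 1 else 0 := by
  have h1 := congrArg (fun φ => ((PowerSeries.coeff (R := Polynomial ℚ) m) φ).eval x) hFstar
  simp only [PowerSeries.coeff_mul, PowerSeries.coeff_one] at h1
  rw [Finset.Nat.sum_antidiagonal_eq_sum_range_succ_mk, eval_finset_sum] at h1
  rw [show ((if m = 0 then (1:Polynomial ℚ) else 0)).eval x = if m = 0 then 1 else 0 from by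
    split <;> simp] at h1
  rw [← h1]
  refine Finset.sum_congr rfl fun r _ => ?_
  rw [eval_mul, eval_Dcoeff, egf, PowerSeries.coeff_mk, eval_mul, eval_C]
  congr 1
  field_simp

lemma c0_eq_one (Fstar : ℕ → Polynomial ℚ) (hFstar : egf Fstar * DstarSer = 1) (x : ℚ) :
    (Fstar 0).eval x / (Nat.factorial 0 : ℚ) = 1 := by
  have h := conv Fstar hFstar x 0
  have he : estar x 0 = 1 := by simp [estar, Nat.factorial]
  simp only [zero_add, range_one, Finset.sum_singleton, Nat.sub_zero, he, mul_one,
    if_pos rfl] at h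
  simpa using h


lemma key_identity (Fstar : ℕ → Polynomial ℚ) (hFstar : egf Fstar * DstarSer = 1)
    (f : Polynomial ℚ) (d : ℕ) (hd : f.natDegree = d) (x : ℚ)
    (S : Polynomial ℚ) (hS : S.comp (X + 1) - S = f) :
    fdiff x S + ∑ r ∈ Finset.Icc 1 (d+1),
        C ((Fstar r).eval x / (Nat.factorial r : ℚ)) * fdiff x ((fdiff 1)^[r-1] f)
      = C x * f := by
  classical
  set K := d + 1 with hK
  set c : ℕ → ℚ := fun r => (Fstar r).eval x / (Nat.factorial r : ℚ) with hcdef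
  have hconv' : ∀ m : ℕ, ∑ r ∈ range (m+1), c r * estar x (m - r) = if m = 0 then 1 else 0 := by
    intro m
    simp only [hcdef]
    exact conv Fstar hFstar x m
  have hc0 : c 0 = 1 := by
    simp only [hcdef]
    exact c0_eq_one Fstar hFstar x
  have hfS : fdiff 1 S = f := by rw [fdiff, ← hS, C_1]
  have hiterS : ∀ k : ℕ, (fdiff 1)^[k+1] S = (fdiff 1)^[k] f := by
    intro k; rw [Function.iterate_succ_apply, hfS]
  have hvanish : ∀ m : ℕ, K ≤ m → (fdiff 1)^[m] f = 0 := by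
    intro m hm
    have h1 : (fdiff 1)^[d+1] f = 0 := iter_fdiff_vanish d f (le_of_eq hd)
    have h2 : m = (m - (d+1)) + (d+1) := by omega
    rw [h2, Function.iterate_add_apply, h1, iter_fdiff_zero']
  have hdegf : ∀ r : ℕ, ((fdiff 1)^[r] f).natDegree ≤ d := by
    intro r
    induction r with
    | zero => simpa using le_of_eq hd
    | succ r ih =>
      rw [Function.iterate_succ_apply']
      have := natDegree_fdiff_le 1 ((fdiff 1)^[r] f)
      omega
  set M := max S.natDegree K with hM
  have hKM : K ≤ M := le_max_right _ _
  have hfdS : fdiff x S = ∑ k ∈ range K, C ((bpoly (k+1)).eval x) * (fdiff 1)^[k] f := by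
    have h1 := newton x M S (le_max_left _ _)
    rw [fdiff, h1, Finset.sum_range_succ']
    rw [show C ((bpoly 0).eval x) * (fdiff 1)^[0] S = S from by simp [bpoly_zero]]
    rw [add_sub_cancel_right]
    rw [Finset.sum_congr rfl (fun k _ => by rw [hiterS k])]
    symm
    apply Finset.sum_subset (Finset.range_subset_range.mpr hKM)
    intro k _ hk
    rw [hvanish k (by simp only [Finset.mem_range, not_lt] at hk; omega), mul_zero]
  have hfdr : ∀ r, 1 ≤ r → r ≤ K → fdiff x ((fdiff 1)^[r-1] f)
      = ∑ k ∈ range (K - r), C ((bpoly (k+1)).eval x) * (fdiff 1)^[k+r] f := by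
    intro r hr1 hrK
    have hdM : ((fdiff 1)^[r-1] f).natDegree ≤ M := le_trans (hdegf (r-1)) (by omega)
    have h1 := newton x M ((fdiff 1)^[r-1] f) hdM
    rw [fdiff, h1, Finset.sum_range_succ']
    rw [show C ((bpoly 0).eval x) * (fdiff 1)^[0] ((fdiff 1)^[r-1] f) = (fdiff 1)^[r-1] f from by
      simp [bpoly_zero]]
    rw [add_sub_cancel_right]
    have hidx : ∀ k : ℕ, (fdiff 1)^[k+1] ((fdiff 1)^[r-1] f) = (fdiff 1)^[k+r] f := by
      intro k
      rw [← Function.iterate_add_apply]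
      congr 1
      omega
    rw [Finset.sum_congr rfl (fun k _ => by rw [hidx k])]
    symm
    apply Finset.sum_subset (Finset.range_subset_range.mpr (by omega : K - r ≤ M))
    intro k _ hk
    rw [hvanish (k+r) (by simp only [Finset.mem_range, not_lt] at hk; omega), mul_zero]
  have hinner : ∀ r ∈ Finset.Icc 1 K, C (c r) * fdiff x ((fdiff 1)^[r-1] f)
      = ∑ m ∈ range K,
          (if r ≤ m then C (c r) * (C ((bpoly (m-r+1)).eval x) * (fdiff 1)^[m] f) else 0) := by
    intro r hr
    rw [Finset.mem_Icc] at hr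
    rw [hfdr r hr.1 hr.2, Finset.mul_sum]
    have hfil : (range K).filter (fun m => r ≤ m) = Finset.Ico r K := by
      ext m
      simp only [Finset.mem_filter, Finset.mem_Ico, Finset.mem_range]
      omega
    rw [← Finset.sum_filter, hfil, Finset.sum_Ico_eq_sum_range]
    refine Finset.sum_congr rfl fun k _ => ?_
    have ht : r + k - r + 1 = k + 1 := by omega
    rw [ht, Nat.add_comm r k]
  calc fdiff x S + ∑ r ∈ Finset.Icc 1 K, C (c r) * fdiff x ((fdiff 1)^[r-1] f)
      = ∑ m ∈ range K, (C ((bpoly (m+1)).eval x) * (fdiff 1)^[m] f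
          + ∑ r ∈ Finset.Icc 1 K,
            (if r ≤ m then C (c r) * (C ((bpoly (m-r+1)).eval x) * (fdiff 1)^[m] f) else 0)) := by
        rw [hfdS, Finset.sum_congr rfl hinner, Finset.sum_comm, ← Finset.sum_add_distrib]
    _ = ∑ m ∈ range K, (if m = 0 then C x else 0) * (fdiff 1)^[m] f := by
        refine Finset.sum_congr rfl fun m hm => ?_
        rw [Finset.mem_range] at hm
        have hfil2 : (Finset.Icc 1 K).filter (fun r => r ≤ m) = Finset.Icc 1 m := by
          ext r
          simp only [Finset.mem_filter, Finset.mem_Icc]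
          omega
        rw [← Finset.sum_filter, hfil2]
        have hfac : ∑ r ∈ Finset.Icc 1 m, C (c r) * (C ((bpoly (m-r+1)).eval x) * (fdiff 1)^[m] f)
            = C (∑ r ∈ Finset.Icc 1 m, c r * (bpoly (m-r+1)).eval x) * (fdiff 1)^[m] f := by
          rw [map_sum, Finset.sum_mul]
          refine Finset.sum_congr rfl fun r _ => ?_
          rw [map_mul]
          ring
        rw [hfac, ← add_mul]
        congr 1
        have h1 : ∀ r ∈ Finset.Icc 1 m, c r * (bpoly (m-r+1)).eval x
            = x * (c r * estar x (m - r)) := by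
          intro r _
          rw [bpoly_succ_eval]
          ring
        rw [Finset.sum_congr rfl h1, bpoly_succ_eval, ← Finset.mul_sum]
        have h2 : estar x m + ∑ r ∈ Finset.Icc 1 m, c r * estar x (m - r)
            = ∑ r ∈ range (m+1), c r * estar x (m - r) := by
          rw [Finset.sum_range_succ']
          rw [show c 0 * estar x (m - 0) = estar x m from by rw [Nat.sub_zero, hc0, one_mul]]
          rw [add_comm]
          congr 1
          rw [← Finset.Ico_add_one_right_eq_Icc, Finset.sum_Ico_eq_sum_range]
          refine Finset.sum_congr (by norm_num) fun i _ => ?_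
          rw [show 1 + i = i + 1 from by omega]
        have hfin : C (x * estar x m) + C (x * ∑ i ∈ Finset.Icc 1 m, c i * estar x (m - i))
            = C (x * (estar x m + ∑ i ∈ Finset.Icc 1 m, c i * estar x (m - i))) := by
          rw [mul_add, map_add]
        rw [hfin, h2, hconv' m, mul_ite, mul_one, mul_zero, apply_ite C, map_zero]
    _ = C x * f := by
        rw [Finset.sum_eq_single 0]
        · simp
        · intro m _ hne
          rw [if_neg hne, zero_mul]
        · intro h
          exact absurd (Finset.mem_range.mpr (by omega)) h

end Scratch

open Polynomial Finset Scratch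

/-- **Corollary 2.2**: for a polynomial `f` of degree `d`,
`x ∑_{k=0}^{n/x-1} f(kx) = ∑_{k=0}^{n-1} f(k)
  + ∑_{r=1}^{d+1} (F*_r(x)/r!) (Δ^{r-1} f(n) - Δ^{r-1} f(0))`,
where `S` is the fractional sum of `f`, `Sg` is the fractional sum of `g(t) = f(x·t)`,
`Δ = Δ_1`, and `F*_r` is the unique sequence of polynomials with
`(∑ (F*_r/r!) z^r) · D*(z) = 1`. -/
theorem generalized_summation_formula_star
    (Fstar : ℕ → Polynomial ℚ) (hFstar : egf Fstar * DstarSer = 1)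
    (f : Polynomial ℚ) (d : ℕ) (hd : f.natDegree = d)
    (x : ℚ) (hx : x ≠ 0) (n : ℚ)
    (S : Polynomial ℚ) (hS0 : S.eval 0 = 0)
    (hS : S.comp (Polynomial.X + 1) - S = f)
    (Sg : Polynomial ℚ) (hSg0 : Sg.eval 0 = 0)
    (hSg : Sg.comp (Polynomial.X + 1) - Sg = f.comp (Polynomial.C x * Polynomial.X)) :
    x * Sg.eval (n / x) = S.eval n +
      ∑ r ∈ Finset.Icc 1 (d + 1),
        (Fstar r).eval x / (Nat.factorial r : ℚ) *
          (((fdiff 1)^[r - 1] f).eval n - ((fdiff 1)^[r - 1] f).eval 0) := by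
  classical
  have hfT : fdiff x (Sg.comp (C x⁻¹ * X)) = f := by
    have hcompu : (Sg.comp (C x⁻¹ * X)).comp (X + C x) = Sg.comp (C x⁻¹ * X + 1) := by
      rw [Polynomial.comp_assoc]
      congr 1
      rw [mul_comp, C_comp, X_comp, mul_add, ← C_mul, inv_mul_cancel₀ hx, C_1]
    have hmain := congrArg (fun p => p.comp (C x⁻¹ * X)) hSg
    simp only [sub_comp] at hmain
    rw [Polynomial.comp_assoc, Polynomial.comp_assoc] at hmain
    rw [show (X + 1 : Polynomial ℚ).comp (C x⁻¹ * X) = C x⁻¹ * X + 1 from by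
      rw [add_comp, X_comp, one_comp]] at hmain
    rw [show (C x * X : Polynomial ℚ).comp (C x⁻¹ * X) = X from by
      rw [mul_comp, C_comp, X_comp, ← mul_assoc, ← C_mul, mul_inv_cancel₀ hx, C_1, one_mul]] at hmain
    rw [comp_X] at hmain
    rw [fdiff, hcompu]
    exact hmain
  set K := d + 1 with hK
  set c : ℕ → ℚ := fun r => (Fstar r).eval x / (Nat.factorial r : ℚ) with hcdef
  set T := Sg.comp (C x⁻¹ * X) with hT
  set R := S + ∑ r ∈ Finset.Icc 1 K, C (c r) * (fdiff 1)^[r-1] f with hR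
  have hkey := key_identity Fstar hFstar f d hd x S hS
  have hfR : fdiff x R = C x * f := by
    rw [hR, fdiff_add, fdiff_sum]
    rw [Finset.sum_congr rfl (fun r _ => fdiff_Cmul x (c r) _)]
    exact hkey
  have hD : fdiff x (C x * T - R) = 0 := by
    have hexpand : fdiff x (C x * T - R) = C x * fdiff x T - fdiff x R := by
      simp only [fdiff, sub_comp, mul_comp, C_comp]
      ring
    rw [hexpand, hfT, hfR, sub_self]
  have hDc := fdiff_const hx hD
  have hn := congrArg (Polynomial.eval n) hDc
  rw [eval_C] at hn
  have hTn : ∀ t : ℚ, T.eval t = Sg.eval (x⁻¹ * t) := by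
    intro t
    rw [hT, eval_comp, eval_mul, eval_C, eval_X]
  have hRn : ∀ t : ℚ, R.eval t
      = S.eval t + ∑ r ∈ Finset.Icc 1 K, c r * ((fdiff 1)^[r-1] f).eval t := by
    intro t
    rw [hR, eval_add, eval_finset_sum]
    congr 1
    exact Finset.sum_congr rfl fun r _ => by rw [eval_mul, eval_C]
  have hEn : (C x * T - R).eval n
      = x * Sg.eval (x⁻¹ * n)
        - (S.eval n + ∑ r ∈ Finset.Icc 1 K, c r * ((fdiff 1)^[r-1] f).eval n) := by
    rw [eval_sub, eval_mul, eval_C, hTn, hRn]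
  have hE0 : (C x * T - R).eval 0
      = - ∑ r ∈ Finset.Icc 1 K, c r * ((fdiff 1)^[r-1] f).eval 0 := by
    rw [eval_sub, eval_mul, eval_C, hTn, hRn, mul_zero, hSg0, hS0, mul_zero]
    ring
  rw [hEn, hE0] at hn
  have hdiv : n / x = x⁻¹ * n := by
    rw [div_eq_mul_inv, mul_comm]
  rw [hdiv]
  have hsum : ∑ r ∈ Finset.Icc 1 K,
        c r * (((fdiff 1)^[r-1] f).eval n - ((fdiff 1)^[r-1] f).eval 0)
      = ∑ r ∈ Finset.Icc 1 K, c r * ((fdiff 1)^[r-1] f).eval n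
        - ∑ r ∈ Finset.Icc 1 K, c r * ((fdiff 1)^[r-1] f).eval 0 := by
    rw [← Finset.sum_sub_distrib]
    exact Finset.sum_congr rfl fun r _ => by ring
  rw [hsum]
  linarith [hn]
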